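/- (Propagation of the Hamiltonian constraint.) Let Λ ∈ ℝ. Suppose on [t₀,T] we are given differentiable symmetric matrix-valued functions g^{ab}(t) (positive definite) and k^{ab}(t), a continuous symmetric matrix-valued function S^{ab}(t), and a differentiable function ρ(t), satisfying: dg^{ab}/dt = −2k^{ab}; dk^{ab}/dt = −2k^a_c k^{bc} − k k^{ab} + S^{ab} + (1/2)(ρ−S)g^{ab} + Λg^{ab}; and dρ/dt = −kρ − k^{ab}S_{ab}. Define ξ(t) = −k_{ab}k^{ab} + k² − 2ρ − 2Λ. Then ξ satisfies dξ/dt = −2kξ on [t₀,T]; in particular, if ξ(t₀) = 0 then ξ(t) = 0 for all t ∈ [t₀,T]. -/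

import Mathlib

open Matrix Real Set Asymptotics

noncomputable section

/-- 3×3 real matrices. -/
abbrev Mat3 := Matrix (Fin 3) (Fin 3) ℝ

/-- The trace `g_{ab} M^{ab}` of a matrix with upper indices (indices lowered with `G⁻¹`). -/
def trK (G M : Mat3) : ℝ := ∑ a, ∑ b, G⁻¹ a b * M a b

/-- The right hand side of the evolution equation for `k^{ab}`:
`−2k^a_c k^{bc} − k k^{ab} + S^{ab} + (1/2)(ρ−S)g^{ab} + Λ g^{ab}`, with abstract matter
terms `S^{ab}` and `ρ`, where `S = g_{ab}S^{ab}`. -/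
def kEvolAbs (Λ : ℝ) (G K SM : Mat3) (ρ : ℝ) : Mat3 :=
  (-2 : ℝ) • (K * G⁻¹ * K) - trK G K • K + SM + ((1 / 2) * (ρ - trK G SM)) • G + Λ • G

/-- The constraint quantity `ξ = −k_{ab}k^{ab} + k² − 2ρ − 2Λ`. -/
def xiC (Λ : ℝ) (G K : Mat3) (ρ : ℝ) : ℝ :=
  -(∑ a, ∑ b, (G⁻¹ * K * G⁻¹) a b * K a b) + trK G K ^ 2 - 2 * ρ - 2 * Λ

section Aux

attribute [local instance] Matrix.linftyOpNormedRing Matrix.linftyOpNormedAlgebra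

theorem mat_nnnorm_le (M : Mat3) : ‖M‖₊ ≤ ∑ a, ∑ b, ‖M a b‖₊ := by
  rw [Matrix.linfty_opNNNorm_def]
  exact Finset.sup_le fun i _ => Finset.single_le_sum
    (f := fun a => ∑ b, ‖M a b‖₊) (fun a _ => zero_le) (Finset.mem_univ i)

theorem mat_norm_le (M : Mat3) : ‖M‖ ≤ ∑ a, ∑ b, ‖M a b‖ := by
  have := mat_nnnorm_le M
  have h2 : ((∑ a, ∑ b, ‖M a b‖₊ : NNReal) : ℝ) = ∑ a, ∑ b, ‖M a b‖ := by push_cast; rfl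
  calc ‖M‖ = ((‖M‖₊ : NNReal) : ℝ) := rfl
  _ ≤ _ := by rw [← h2]; exact_mod_cast this

theorem mat_entry_nnnorm_le (M : Mat3) (a b : Fin 3) : ‖M a b‖₊ ≤ ‖M‖₊ := by
  rw [Matrix.linfty_opNNNorm_def]
  calc ‖M a b‖₊ ≤ ∑ c, ‖M a c‖₊ :=
        Finset.single_le_sum (f := fun c => ‖M a c‖₊) (fun c _ => zero_le) (Finset.mem_univ b)
  _ ≤ _ := Finset.le_sup (f := fun i => ∑ j, ‖M i j‖₊) (Finset.mem_univ a)

theorem hasDerivWithinAt_mat {φ : ℝ → Mat3} {φ' : Mat3} {s : Set ℝ} {x : ℝ}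
    (h : ∀ a b, HasDerivWithinAt (fun t => φ t a b) (φ' a b) s x) :
    HasDerivWithinAt φ φ' s x := by
  refine hasDerivWithinAt_iff_isLittleO.2 ?_
  have H : ∀ a b : Fin 3, (fun y => φ y a b - φ x a b - (y - x) * φ' a b) =o[nhdsWithin x s]
      fun y => y - x := fun a b => by
    simpa [hasDerivWithinAt_iff_isLittleO, smul_eq_mul] using h a b
  have Hsum : (fun y => ∑ a, ∑ b, ‖φ y a b - φ x a b - (y - x) * φ' a b‖)
      =o[nhdsWithin x s] fun y => y - x :=
    by have := IsLittleO.sum fun a (_ : a ∈ Finset.univ) => IsLittleO.sum fun b (_ : b ∈ Finset.univ) => (H a b).norm_left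
       simp only [Finset.sum_fn] at this
       exact this
  refine (isBigO_of_le _ fun y => ?_).trans_isLittleO Hsum
  have h1 : ‖φ y - φ x - (y - x) • φ'‖ ≤ ∑ a, ∑ b, ‖φ y a b - φ x a b - (y - x) * φ' a b‖ := by
    have := mat_norm_le (φ y - φ x - (y - x) • φ')
    simpa [Matrix.sub_apply, Matrix.smul_apply, smul_eq_mul] using this
  calc ‖φ y - φ x - (y - x) • φ'‖ ≤ _ := h1
  _ ≤ ‖∑ a, ∑ b, ‖φ y a b - φ x a b - (y - x) * φ' a b‖‖ := le_abs_self _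

theorem hasDerivWithinAt_entry {φ : ℝ → Mat3} {φ' : Mat3} {s : Set ℝ} {x : ℝ}
    (h : HasDerivWithinAt φ φ' s x) (a b : Fin 3) :
    HasDerivWithinAt (fun t => φ t a b) (φ' a b) s x := by
  rw [hasDerivWithinAt_iff_isLittleO]
  replace h := hasDerivWithinAt_iff_isLittleO.1 h
  have e : (fun y => φ y a b - φ x a b - (y - x) • φ' a b) =
      fun y => (φ y - φ x - (y - x) • φ') a b := by
    funext y; simp [Matrix.sub_apply, Matrix.smul_apply]
  rw [e]
  refine (isBigO_of_le _ fun y => ?_).trans_isLittleO h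
  calc ‖(φ y - φ x - (y - x) • φ') a b‖ ≤ ‖φ y - φ x - (y - x) • φ'‖ := by
        exact_mod_cast mat_entry_nnnorm_le _ a b
  _ = _ := rfl

theorem hasDerivWithinAt_inv_mat {G : ℝ → Mat3} {G' : Mat3} {s : Set ℝ} {x : ℝ}
    (hu : IsUnit (G x)) (h : HasDerivWithinAt G G' s x) :
    HasDerivWithinAt (fun t => (G t)⁻¹) (-((G x)⁻¹ * G' * (G x)⁻¹)) s x := by
  have hc := (hasFDerivAt_ringInverse (𝕜 := ℝ) hu.unit).comp_hasDerivWithinAt x h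
  have e1 : (fun t => Ring.inverse (G t)) = fun t => (G t)⁻¹ := by
    funext t; rw [Matrix.nonsing_inv_eq_ringInverse]
  have e2 : ((↑hu.unit⁻¹ : Mat3)) = (G x)⁻¹ := by
    rw [Matrix.coe_units_inv, hu.unit_spec]
  rw [show (Ring.inverse ∘ G) = fun t => (G t)⁻¹ from e1 ▸ rfl] at hc
  refine hc.congr_deriv ?_
  simp [e2, ContinuousLinearMap.mulLeftRight_apply]

/-- trace as a continuous linear map -/
def traceCLM : Mat3 →L[ℝ] ℝ := LinearMap.toContinuousLinearMap (Matrix.traceLinearMap (Fin 3) ℝ ℝ)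

theorem hdw_trace {M : ℝ → Mat3} {M' : Mat3} {s : Set ℝ} {x : ℝ}
    (h : HasDerivWithinAt M M' s x) :
    HasDerivWithinAt (fun t => Matrix.trace (M t)) (Matrix.trace M') s x := by
  have := (traceCLM.hasFDerivAt).comp_hasDerivWithinAt x h
  exact this

theorem sum_mul_eq_trace (M N : Mat3) : (∑ a, ∑ b, M a b * N a b) = Matrix.trace (M * Nᵀ) := by
  simp [Matrix.trace, Matrix.mul_apply, Matrix.diag]

theorem trK_eq_trace {G M : Mat3} (hM : M.IsSymm) : trK G M = Matrix.trace (G⁻¹ * M) := by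
  rw [trK, sum_mul_eq_trace, hM.eq]

theorem stmt14 (Λ t₀ T : ℝ) (hT : t₀ ≤ T)
    (g k SM : ℝ → Mat3) (ρ : ℝ → ℝ)
    (hgpd : ∀ t ∈ Icc t₀ T, (g t).PosDef)
    (hksym : ∀ t ∈ Icc t₀ T, (k t).IsSymm)
    (hSsym : ∀ t ∈ Icc t₀ T, (SM t).IsSymm)
    (hScont : ∀ a b : Fin 3, ContinuousOn (fun t => SM t a b) (Icc t₀ T))
    (hgode : ∀ a b : Fin 3, ∀ t ∈ Icc t₀ T,
      HasDerivWithinAt (fun s => g s a b) (-2 * k t a b) (Icc t₀ T) t)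
    (hkode : ∀ a b : Fin 3, ∀ t ∈ Icc t₀ T,
      HasDerivWithinAt (fun s => k s a b)
        (kEvolAbs Λ (g t) (k t) (SM t) (ρ t) a b) (Icc t₀ T) t)
    (hρode : ∀ t ∈ Icc t₀ T,
      HasDerivWithinAt ρ
        (-(trK (g t) (k t)) * ρ t
          - ∑ a, ∑ b, k t a b * ((g t)⁻¹ * SM t * (g t)⁻¹) a b) (Icc t₀ T) t) :
    (∀ t ∈ Icc t₀ T,
      HasDerivWithinAt (fun s => xiC Λ (g s) (k s) (ρ s))
        (-2 * trK (g t) (k t) * xiC Λ (g t) (k t) (ρ t)) (Icc t₀ T) t) ∧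
    (xiC Λ (g t₀) (k t₀) (ρ t₀) = 0 → ∀ t ∈ Icc t₀ T, xiC Λ (g t) (k t) (ρ t) = 0) := by
  -- basic invertibility/symmetry facts
  have hu : ∀ t ∈ Icc t₀ T, IsUnit (g t) := fun t ht => by
    rw [Matrix.isUnit_iff_isUnit_det _]
    exact isUnit_iff_ne_zero.2 (ne_of_gt (hgpd t ht).det_pos)
  have hAg : ∀ t ∈ Icc t₀ T, (g t)⁻¹ * g t = 1 := fun t ht =>
    Matrix.nonsing_inv_mul _ ((Matrix.isUnit_iff_isUnit_det _).1 (hu t ht))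
  have hgsym : ∀ t ∈ Icc t₀ T, (g t).IsSymm := fun t ht => by
    have := (hgpd t ht).isHermitian
    rwa [Matrix.IsHermitian, Matrix.conjTranspose_eq_transpose_of_trivial] at this
  have hAsym : ∀ t ∈ Icc t₀ T, ((g t)⁻¹).IsSymm := fun t ht => by
    rw [Matrix.IsSymm, Matrix.transpose_nonsing_inv, (hgsym t ht).eq]
  -- matrix-level derivatives
  have hGm : ∀ t ∈ Icc t₀ T, HasDerivWithinAt g ((-2 : ℝ) • k t) (Icc t₀ T) t := fun t ht =>
    hasDerivWithinAt_mat fun a b => by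
      simpa [Matrix.smul_apply, smul_eq_mul] using hgode a b t ht
  have hKm : ∀ t ∈ Icc t₀ T,
      HasDerivWithinAt k (kEvolAbs Λ (g t) (k t) (SM t) (ρ t)) (Icc t₀ T) t := fun t ht =>
    hasDerivWithinAt_mat fun a b => hkode a b t ht
  have hAm : ∀ t ∈ Icc t₀ T, HasDerivWithinAt (fun s => (g s)⁻¹)
      ((2 : ℝ) • ((g t)⁻¹ * k t * (g t)⁻¹)) (Icc t₀ T) t := fun t ht => by
    have := hasDerivWithinAt_inv_mat (hu t ht) (hGm t ht)
    convert this using 1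
    simp [Matrix.mul_smul, Matrix.smul_mul]
  -- the trace form of ξ
  set ξf : ℝ → ℝ := fun s =>
    -(Matrix.trace (((g s)⁻¹ * k s) * ((g s)⁻¹ * k s)))
      + Matrix.trace ((g s)⁻¹ * k s) * Matrix.trace ((g s)⁻¹ * k s) - 2 * ρ s - 2 * Λ with hξf
  have hEq : ∀ s ∈ Icc t₀ T, xiC Λ (g s) (k s) (ρ s) = ξf s := by
    intro s hs
    rw [hξf, xiC, trK_eq_trace (hksym s hs), sum_mul_eq_trace, (hksym s hs).eq,
      Matrix.mul_assoc ((g s)⁻¹ * k s) _ _]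
    ring
  -- Part 1: the derivative
  have part1 : ∀ t ∈ Icc t₀ T,
      HasDerivWithinAt (fun s => xiC Λ (g s) (k s) (ρ s))
        (-2 * trK (g t) (k t) * xiC Λ (g t) (k t) (ρ t)) (Icc t₀ T) t := by
    intro t ht
    set A := (g t)⁻¹ with hA
    set K := k t with hK
    set S := SM t with hS
    set G := g t with hG
    set A' : Mat3 := (2 : ℝ) • (A * K * A) with hA'
    set K' : Mat3 := kEvolAbs Λ G K S (ρ t) with hK'
    have hAK : HasDerivWithinAt (fun s => (g s)⁻¹ * k s) (A' * K + A * K') (Icc t₀ T) t :=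
      (hAm t ht).mul (hKm t ht)
    have hQT : HasDerivWithinAt (fun s => Matrix.trace (((g s)⁻¹ * k s) * ((g s)⁻¹ * k s)))
        (Matrix.trace ((A' * K + A * K') * (A * K) + (A * K) * (A' * K + A * K')))
        (Icc t₀ T) t := hdw_trace (hAK.mul hAK)
    have hτ : HasDerivWithinAt (fun s => Matrix.trace ((g s)⁻¹ * k s))
        (Matrix.trace (A' * K + A * K')) (Icc t₀ T) t := hdw_trace hAK
    have hρ' := hρode t ht
    have hcomb : HasDerivWithinAt ξf
        (-(Matrix.trace ((A' * K + A * K') * (A * K) + (A * K) * (A' * K + A * K')))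
          + (Matrix.trace (A' * K + A * K') * Matrix.trace (A * K)
             + Matrix.trace (A * K) * Matrix.trace (A' * K + A * K'))
          - 2 * (-(trK G K) * ρ t - ∑ a, ∑ b, K a b * (A * S * A) a b)) (Icc t₀ T) t := by
      exact ((hQT.neg.add (hτ.mul hτ)).sub (hρ'.const_mul 2)).sub_const (2 * Λ)
    refine (hcomb.congr (fun s hs => hEq s hs) (hEq t ht)).congr_deriv ?_
    -- now the algebra
    clear hcomb hQT hτ hAK hρ'
    have hAgt : A * G = 1 := hAg t ht
    -- scalar abbreviations
    set τ : ℝ := Matrix.trace (A * K) with hτv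
    set σ : ℝ := Matrix.trace (A * S) with hσv
    set Q : ℝ := Matrix.trace (A * K * A * K) with hQv
    set P : ℝ := Matrix.trace (A * S * A * K) with hPv
    set Cc : ℝ := Matrix.trace (A * K * A * K * A * K) with hCv
    have htrK : trK G K = τ := by rw [trK_eq_trace (hksym t ht), ← hA, hτv]
    have htrS : trK G S = σ := by rw [trK_eq_trace (hSsym t ht), ← hA, hσv]
    have hrot : ∀ X Y : Mat3, Matrix.trace (X * Y) = Matrix.trace (Y * X) :=
      Matrix.trace_mul_comm
    -- the second derivative of the quadratic term
    have e1 : Matrix.trace ((A' * K + A * K') * (A * K) + (A * K) * (A' * K + A * K'))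
        = 2 * Matrix.trace ((A' * K + A * K') * (A * K)) := by
      rw [Matrix.trace_add, hrot (A * K)]; ring
    have e2 : Matrix.trace (A' * K * (A * K)) = 2 * Cc := by
      rw [hA', hCv]
      simp only [smul_mul_assoc, Matrix.trace_smul, smul_eq_mul, ← mul_assoc]
    have e3 : Matrix.trace (A * K' * (A * K)) = -2 * Cc - τ * Q + P + 
        ((1/2) * (ρ t - σ)) * τ + Λ * τ := by
      rw [hK', kEvolAbs, htrK, htrS]
      simp only [Matrix.mul_add, Matrix.mul_sub, Matrix.add_mul, Matrix.sub_mul,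
        mul_smul_comm, smul_mul_assoc, Matrix.trace_add, Matrix.trace_sub,
        Matrix.trace_smul, smul_eq_mul, ← mul_assoc, ← hA, ← hG]
      rw [hAgt]
      simp only [one_mul, ← hQv, ← hCv, ← hPv, ← hτv]
    have e4 : Matrix.trace (A' * K) = 2 * Q := by
      rw [hA', hQv]
      simp only [smul_mul_assoc, Matrix.trace_smul, smul_eq_mul, ← mul_assoc]
    have e5 : Matrix.trace (A * K') = -2 * Q - τ * τ + σ
        + 3 * ((1/2) * (ρ t - σ)) + 3 * Λ := by
      rw [hK', kEvolAbs, htrK, htrS]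
      simp only [Matrix.mul_add, Matrix.mul_sub, mul_smul_comm, smul_mul_assoc,
        Matrix.trace_add, Matrix.trace_sub, Matrix.trace_smul, smul_eq_mul,
        ← mul_assoc, ← hA]
      rw [hAgt]
      simp only [Matrix.trace_one, Fintype.card_fin, ← hQv, ← hτv, ← hσv]
      push_cast
      ring
    have hAs : Aᵀ = A := by rw [hA, hG]; exact (hAsym t ht).eq
    have hSs : Sᵀ = S := by rw [hS]; exact (hSsym t ht).eq
    have eρ : (∑ a, ∑ b, K a b * (A * S * A) a b) = P := by
      rw [sum_mul_eq_trace]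
      have hsym : (A * S * A)ᵀ = A * S * A := by
        rw [Matrix.transpose_mul, Matrix.transpose_mul, hAs, hSs, ← Matrix.mul_assoc]
      rw [hsym, hrot K (A * S * A), hPv]
    have exi : xiC Λ G K (ρ t) = -Q + τ * τ - 2 * ρ t - 2 * Λ := by
      rw [hG, hK]
      rw [hEq t ht]
      simp only [hξf]
      simp only [← hG, ← hA, ← hK, ← Matrix.mul_assoc]
      rfl
    rw [e1, Matrix.add_mul, Matrix.trace_add, e2, e3, Matrix.trace_add, e4, e5, eρ, htrK, exi]
    ring
  refine ⟨part1, fun h0 => ?_⟩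
  -- continuity of the ingredients
  have hAcont : ∀ a b, ContinuousOn (fun s => (g s)⁻¹ a b) (Icc t₀ T) := fun a b u hu' =>
    (hasDerivWithinAt_entry (hAm u hu') a b).continuousWithinAt
  have hkcont : ∀ a b, ContinuousOn (fun s => k s a b) (Icc t₀ T) := fun a b u hu' =>
    (hkode a b u hu').continuousWithinAt
  have hτcont : ContinuousOn (fun s => trK (g s) (k s)) (Icc t₀ T) := by
    simp only [trK]
    exact continuousOn_finset_sum _ fun a _ => continuousOn_finset_sum _ fun b _ =>
      (hAcont a b).mul (hkcont a b)
  obtain ⟨C, hC⟩ := (isCompact_Icc).exists_bound_of_continuousOn hτcont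
  have hC0 : 0 ≤ C := le_trans (norm_nonneg _) (hC t₀ ⟨le_rfl, hT⟩)
  set Kl : NNReal := ⟨2 * C, by positivity⟩ with hKl
  set v : ℝ → ℝ → ℝ :=
    fun u x => (if u ∈ Icc t₀ T then -2 * trK (g u) (k u) else 0) * x with hv
  have hlip : ∀ u, LipschitzOnWith Kl (v u) univ := by
    intro u
    apply LipschitzWith.lipschitzOnWith
    apply LipschitzWith.of_dist_le_mul
    intro x y
    have hcoef : |(if u ∈ Icc t₀ T then -2 * trK (g u) (k u) else 0)| ≤ (Kl : ℝ) := by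
      have : (Kl : ℝ) = 2 * C := rfl
      rw [this]
      split_ifs with hmem
      · rw [abs_mul]
        calc |(-2 : ℝ)| * |trK (g u) (k u)| = 2 * |trK (g u) (k u)| := by norm_num
        _ ≤ 2 * C := by
            have := hC u hmem
            rw [Real.norm_eq_abs] at this
            linarith
      · simp; positivity
    simp only [hv, Real.dist_eq, ← mul_sub, abs_mul]
    exact mul_le_mul_of_nonneg_right hcoef (abs_nonneg _)
  have key : EqOn (fun s => xiC Λ (g s) (k s) (ρ s)) (fun _ => (0 : ℝ)) (Icc t₀ T) := by
    apply ODE_solution_unique_of_mem_Icc_right (fun u _ => hlip u)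
      (fun u hu' => (part1 u hu').continuousWithinAt) ?_ (fun _ _ => mem_univ _)
      continuousOn_const ?_ (fun _ _ => mem_univ _) (by simpa using h0)
    · intro u hu'
      have h1 : HasDerivWithinAt (fun s => xiC Λ (g s) (k s) (ρ s))
          (-2 * trK (g u) (k u) * xiC Λ (g u) (k u) (ρ u)) (Ici u) u :=
        (part1 u (Ico_subset_Icc_self hu')).mono_of_mem_nhdsWithin (Icc_mem_nhdsGE_of_mem hu')
      have h2 : v u (xiC Λ (g u) (k u) (ρ u))
          = -2 * trK (g u) (k u) * xiC Λ (g u) (k u) (ρ u) := by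
        simp only [hv, if_pos (Ico_subset_Icc_self hu')]
      rw [h2]
      exact h1
    · intro u hu'
      have : v u 0 = 0 := by rw [hv]; ring
      rw [this]
      exact hasDerivWithinAt_const _ _ _
  exact fun t ht => key ht
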